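/- Define Q*(s,a,g) = gᵀ(s + U a)/(1-γ) + γ‖g‖₂/(1-γ)² for orthogonal U ∈ ℝ^{d×d}, γ ∈ (0,1), and let π*(s,g) = Uᵀg/‖g‖₂ for g ≠ 0. Then Q* satisfies the Bellman equation Q*(s,a,g) = gᵀ s' + γ Q*(s', π*(s',g), g), where s' = s + U a. -/

import Mathlib

open RealInnerProductSpace

/-- Identification of `Fin d → ℝ` with Euclidean space `ℝ^d` (with the `ℓ²` norm). -/
noncomputable def toEuc {d : ℕ} (v : Fin d → ℝ) : EuclideanSpace ℝ (Fin d) :=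
  (WithLp.equiv 2 (Fin d → ℝ)).symm v

/-- With `Q*(s,a,g) = gᵀ(s+Ua)/(1-γ) + γ‖g‖₂/(1-γ)²` and `π*(s,g) = Uᵀg/‖g‖₂`
(for orthogonal `U`, `γ ∈ (0,1)`, `g ≠ 0`), `Q*` satisfies the Bellman equation
`Q*(s,a,g) = gᵀs' + γ Q*(s', π*(s',g), g)` where `s' = s + Ua`. -/
theorem dense_bellman_fixed_point {d : ℕ} (γ : ℝ) (hγ0 : 0 < γ) (hγ1 : γ < 1)
    (U : Matrix (Fin d) (Fin d) ℝ) (hU : U ∈ Matrix.orthogonalGroup (Fin d) ℝ)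
    (g s a : EuclideanSpace ℝ (Fin d)) (hg : g ≠ 0) (ha : ‖a‖ ≤ 1) :
    ⟪g, s + toEuc (U.mulVec a)⟫ / (1 - γ) + γ * ‖g‖ / (1 - γ) ^ 2 =
      ⟪g, s + toEuc (U.mulVec a)⟫ +
        γ * (⟪g, (s + toEuc (U.mulVec a)) +
              toEuc (U.mulVec (‖g‖⁻¹ • toEuc (U.transpose.mulVec g)))⟫ / (1 - γ) +
            γ * ‖g‖ / (1 - γ) ^ 2) := by
  have hUU : U * U.transpose = 1 := by
    have := (Matrix.mem_orthogonalGroup_iff (Fin d) ℝ).mp hU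
    simpa [Matrix.star_eq_conjTranspose] using this
  have hvec : U.mulVec ((‖g‖⁻¹ • toEuc (U.transpose.mulVec g) : EuclideanSpace ℝ (Fin d)) : Fin d → ℝ)
      = ‖g‖⁻¹ • (g : Fin d → ℝ) := by
    have h1 : U.mulVec (U.transpose.mulVec (g : Fin d → ℝ)) = g := by
      rw [Matrix.mulVec_mulVec, hUU, Matrix.one_mulVec]
    calc U.mulVec (‖g‖⁻¹ • (U.transpose.mulVec (g : Fin d → ℝ)))
        = ‖g‖⁻¹ • U.mulVec (U.transpose.mulVec (g : Fin d → ℝ)) := by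
          rw [Matrix.mulVec_smul]
      _ = ‖g‖⁻¹ • (g : Fin d → ℝ) := by rw [h1]
  have hinner : ⟪g, toEuc (U.mulVec ((‖g‖⁻¹ • toEuc (U.transpose.mulVec g) : EuclideanSpace ℝ (Fin d)) : Fin d → ℝ))⟫ = ‖g‖ := by
    rw [hvec]
    have : (toEuc (‖g‖⁻¹ • (g : Fin d → ℝ))) = ‖g‖⁻¹ • g := rfl
    rw [this, real_inner_smul_right, real_inner_self_eq_norm_sq]
    have hng : ‖g‖ ≠ 0 := norm_ne_zero_iff.mpr hg
    field_simp
  simp only [inner_add_right]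
  rw [← WithLp.ofLp_smul, hinner]
  have h1γ : (1 : ℝ) - γ ≠ 0 := by linarith
  field_simp
  ring
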